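/- Claim (monotone hierarchy path counts): In a monotone hierarchy with root i_0, for any two nodes i, j with ρ(j) = ρ(i) + 1 (where ρ is distance to the root), and any ℓ ≥ 0, the number of successors of i at distance ℓ from i is at least the number of successors of j at distance ℓ from j: p(i,ℓ) ≥ p(j,ℓ). -/

import Mathlib

/-- `j` is a successor of `i` in the tree `g` oriented away from the root `r`:
`i` lies on the (unique) path from the root to `j`. -/
def Succ {n : ℕ} (g : SimpleGraph (Fin n)) (r i j : Fin n) : Prop :=
  i ≠ j ∧ g.dist r j = g.dist r i + g.dist i j

/-- `p g r i ℓ`: the number of successors of `i` at distance `ℓ` from `i`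
(counting `i` itself when `ℓ = 0`). -/
noncomputable def succCount {n : ℕ} (g : SimpleGraph (Fin n)) (r i : Fin n) (ℓ : ℕ) : ℕ :=
  Nat.card {j : Fin n | g.dist i j = ℓ ∧ g.dist r j = g.dist r i + ℓ}

/-- A monotone hierarchy: a rooted tree in which (i) degrees weakly decrease with
depth; (ii)-(iii) degree orderings between same-depth nodes propagate consistently
to their successors; (iv) all leaves are at the same distance `h` from the root. -/
def IsMonotoneHierarchy {n : ℕ} (g : SimpleGraph (Fin n)) [DecidableRel g.Adj]
    (r : Fin n) (h : ℕ) : Prop :=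
  g.IsTree ∧
  (∀ i j, g.dist r i < g.dist r j → g.degree j ≤ g.degree i) ∧
  (∀ i j, g.dist r i = g.dist r j → g.degree j < g.degree i →
    ∀ k l, Succ g r i k → Succ g r j l → g.dist r k = g.dist r l →
      g.degree l ≤ g.degree k) ∧
  (∀ i j, g.dist r i = g.dist r j → g.degree i = g.degree j →
    (∃ k l, Succ g r i k ∧ Succ g r j l ∧ g.dist r k = g.dist r l ∧
      g.degree l < g.degree k) →
    ∀ k l, Succ g r i k → Succ g r j l → g.dist r k = g.dist r l →
      g.degree l ≤ g.degree k) ∧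
  (∀ i, g.degree i = 1 → g.dist r i = h)

open SimpleGraph Finset

section Aux

variable {n : ℕ} {g : SimpleGraph (Fin n)} {r : Fin n}

/-- Splitting the distance at a vertex on a shortest walk. -/
lemma MH.dist_split (hc : g.Connected) {u v w : Fin n} (p : g.Walk u v)
    (hp : p.length = g.dist u v) (hw : w ∈ p.support) :
    g.dist u w + g.dist w v = g.dist u v := by
  have h1 : g.dist u w ≤ (p.takeUntil w hw).length := SimpleGraph.dist_le _
  have h2 : g.dist w v ≤ (p.dropUntil w hw).length := SimpleGraph.dist_le _
  have h3 : (p.takeUntil w hw).length + (p.dropUntil w hw).length = p.length := by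
    conv_rhs => rw [← p.take_spec hw]
    rw [SimpleGraph.Walk.length_append]
  have h4 := hc.dist_triangle (u := u) (v := w) (w := v)
  omega

/-- In a tree, every path realizes the distance. -/
lemma MH.path_len (hT : g.IsTree) {u v : Fin n} (p : g.Walk u v) (hp : p.IsPath) :
    p.length = g.dist u v := by
  obtain ⟨q, hq, hlen⟩ := hT.isConnected.exists_path_of_dist u v
  obtain ⟨w, _, huniq⟩ := hT.existsUnique_path u v
  rw [(huniq p hp).trans (huniq q hq).symm, hlen]

/-- In a tree, adjacent vertices are at different distances from the root. -/
lemma MH.adj_level (hT : g.IsTree) {x y : Fin n} (hadj : g.Adj x y) :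
    g.dist r x ≠ g.dist r y := by
  intro heq
  obtain ⟨q, hq, hlen⟩ := hT.isConnected.exists_path_of_dist r y
  by_cases hx : x ∈ q.support
  · have h1 := MH.dist_split hT.isConnected q hlen hx
    have h2 : g.dist x y = 1 := SimpleGraph.dist_eq_one_iff_adj.mpr hadj
    omega
  · have hW : (SimpleGraph.Walk.cons hadj q.reverse).IsPath := by
      rw [SimpleGraph.Walk.cons_isPath_iff]
      refine ⟨hq.reverse, ?_⟩
      simpa using hx
    have hlen2 := MH.path_len hT _ hW
    rw [SimpleGraph.Walk.length_cons, SimpleGraph.Walk.length_reverse] at hlen2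
    rw [SimpleGraph.dist_comm (u := x) (v := r)] at hlen2
    omega

/-- Uniqueness of the child through which a descendant is reached. -/
lemma MH.child_eq (hT : g.IsTree) {x c c' k : Fin n}
    (hc : g.Adj x c) (hc' : g.Adj x c')
    (hdc : g.dist r c = g.dist r x + 1) (hdc' : g.dist r c' = g.dist r x + 1)
    (hk : g.dist r k = g.dist r c + g.dist c k)
    (hk' : g.dist r k = g.dist r c' + g.dist c' k) : c = c' := by
  obtain ⟨p1, hp1⟩ := hT.isConnected.exists_walk_length_eq_dist r x
  obtain ⟨q1, hq1⟩ := hT.isConnected.exists_walk_length_eq_dist c k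
  obtain ⟨q1', hq1'⟩ := hT.isConnected.exists_walk_length_eq_dist c' k
  set W : g.Walk r k := p1.append (SimpleGraph.Walk.cons hc q1) with hWdef
  set W' : g.Walk r k := p1.append (SimpleGraph.Walk.cons hc' q1') with hW'def
  have hWlen : W.length = g.dist r k := by
    rw [hWdef, SimpleGraph.Walk.length_append, SimpleGraph.Walk.length_cons, hp1, hq1]
    omega
  have hW'len : W'.length = g.dist r k := by
    rw [hW'def, SimpleGraph.Walk.length_append, SimpleGraph.Walk.length_cons, hp1, hq1']
    omega
  have hWW : W = W' := by
    obtain ⟨P, hP, huniq⟩ := hT.existsUnique_path r k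
    rw [huniq W (W.isPath_of_length_eq_dist hWlen),
      huniq W' (W'.isPath_of_length_eq_dist hW'len)]
  have h1 : W.getVert (g.dist r x + 1) = c := by
    rw [hWdef, SimpleGraph.Walk.getVert_append, if_neg (by rw [hp1]; omega), hp1,
      Nat.add_sub_cancel_left, SimpleGraph.Walk.getVert_cons _ _ one_ne_zero, Nat.sub_self,
      SimpleGraph.Walk.getVert_zero]
  have h2 : W'.getVert (g.dist r x + 1) = c' := by
    rw [hW'def, SimpleGraph.Walk.getVert_append, if_neg (by rw [hp1]; omega), hp1,
      Nat.add_sub_cancel_left, SimpleGraph.Walk.getVert_cons _ _ one_ne_zero, Nat.sub_self,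
      SimpleGraph.Walk.getVert_zero]
  rw [← h1, ← h2, hWW]

/-- Uniqueness of the parent. -/
lemma MH.parent_eq (hT : g.IsTree) {x p p' : Fin n} (h : g.Adj x p) (h' : g.Adj x p')
    (hd : g.dist r p + 1 = g.dist r x) (hd' : g.dist r p' + 1 = g.dist r x) : p = p' := by
  obtain ⟨w1, hw1⟩ := hT.isConnected.exists_walk_length_eq_dist r p
  obtain ⟨w1', hw1'⟩ := hT.isConnected.exists_walk_length_eq_dist r p'
  set W : g.Walk r x := w1.append (SimpleGraph.Walk.cons h.symm SimpleGraph.Walk.nil) with hWdef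
  set W' : g.Walk r x := w1'.append (SimpleGraph.Walk.cons h'.symm SimpleGraph.Walk.nil)
    with hW'def
  have hWlen : W.length = g.dist r x := by
    rw [hWdef, SimpleGraph.Walk.length_append, SimpleGraph.Walk.length_cons,
      SimpleGraph.Walk.length_nil, hw1]
    omega
  have hW'len : W'.length = g.dist r x := by
    rw [hW'def, SimpleGraph.Walk.length_append, SimpleGraph.Walk.length_cons,
      SimpleGraph.Walk.length_nil, hw1']
    omega
  have hWW : W = W' := by
    obtain ⟨P, hP, huniq⟩ := hT.existsUnique_path r x
    rw [huniq W (W.isPath_of_length_eq_dist hWlen),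
      huniq W' (W'.isPath_of_length_eq_dist hW'len)]
  have h1 : W.getVert (g.dist r p) = p := by
    rw [hWdef, SimpleGraph.Walk.getVert_append, if_neg (by rw [hw1]; omega), hw1]
    simp
  have h2 : W'.getVert (g.dist r p) = p' := by
    have hpp : g.dist r p = g.dist r p' := by omega
    rw [hW'def, SimpleGraph.Walk.getVert_append, if_neg (by rw [hw1']; omega), hw1', hpp]
    simp
  rw [← h1, ← h2, hWW]

/-- Every non-root vertex has a parent. -/
lemma MH.exists_parent (hc : g.Connected) {x : Fin n} (hx : x ≠ r) :
    ∃ p, g.Adj x p ∧ g.dist r p + 1 = g.dist r x := by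
  have hd : g.dist r x ≠ 0 := fun hh => hx ((hc.dist_eq_zero_iff.mp hh).symm)
  obtain ⟨w, hw⟩ := SimpleGraph.exists_walk_of_dist_ne_zero hd
  set p := w.getVert (w.length - 1) with hpdef
  have hlpos : 0 < w.length := by omega
  have hadj : g.Adj p x := by
    have h := w.adj_getVert_succ (i := w.length - 1) (by omega)
    have : w.length - 1 + 1 = w.length := by omega
    rw [this, SimpleGraph.Walk.getVert_length] at h
    exact h
  have hmem : p ∈ w.support :=
    SimpleGraph.Walk.mem_support_iff_exists_getVert.mpr ⟨w.length - 1, rfl, by omega⟩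
  have hsplit := MH.dist_split hc w hw hmem
  have hpx : g.dist p x = 1 := SimpleGraph.dist_eq_one_iff_adj.mpr hadj
  exact ⟨p, hadj.symm, by omega⟩

/-- The children of `x` (w.r.t. root `r`). -/
noncomputable def MH.ch (g : SimpleGraph (Fin n)) (r x : Fin n) : Finset (Fin n) :=
  @Finset.filter _ (fun c => g.Adj x c ∧ g.dist r c = g.dist r x + 1)
    (Classical.decPred _) Finset.univ

lemma MH.mem_ch {x c : Fin n} :
    c ∈ MH.ch g r x ↔ g.Adj x c ∧ g.dist r c = g.dist r x + 1 := by
  unfold MH.ch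
  rw [@Finset.mem_filter _ _ (Classical.decPred _) Finset.univ c]
  simp

/-- The descendants of `i` at distance `ℓ`. -/
noncomputable def MH.lev (g : SimpleGraph (Fin n)) (r i : Fin n) (ℓ : ℕ) : Finset (Fin n) :=
  @Finset.filter _ (fun k => g.dist i k = ℓ ∧ g.dist r k = g.dist r i + ℓ)
    (Classical.decPred _) Finset.univ

lemma MH.mem_lev {i k : Fin n} {ℓ : ℕ} :
    k ∈ MH.lev g r i ℓ ↔ g.dist i k = ℓ ∧ g.dist r k = g.dist r i + ℓ := by
  unfold MH.lev
  rw [@Finset.mem_filter _ _ (Classical.decPred _) Finset.univ k]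
  simp

lemma MH.succCount_eq (i : Fin n) (ℓ : ℕ) :
    succCount g r i ℓ = (MH.lev g r i ℓ).card := by
  have hset : {k : Fin n | g.dist i k = ℓ ∧ g.dist r k = g.dist r i + ℓ}
      = ↑(MH.lev g r i ℓ) := by
    ext k
    simp [MH.mem_lev]
  rw [succCount, hset, Nat.card_coe_set_eq, Set.ncard_coe_finset]

lemma MH.lev_zero (hc : g.Connected) (i : Fin n) : MH.lev g r i 0 = {i} := by
  ext k
  rw [MH.mem_lev, Finset.mem_singleton]
  constructor
  · rintro ⟨h0, -⟩
    exact ((hc.dist_eq_zero_iff).mp h0).symm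
  · rintro rfl
    simp [SimpleGraph.dist_self]

lemma MH.lev_subset (hc : g.Connected) {x c : Fin n} (hch : c ∈ MH.ch g r x) (ℓ : ℕ) :
    MH.lev g r c ℓ ⊆ MH.lev g r x (ℓ + 1) := by
  obtain ⟨hadj, hdc⟩ := MH.mem_ch.mp hch
  intro k hk
  obtain ⟨h1, h2⟩ := MH.mem_lev.mp hk
  have hxc : g.dist x c = 1 := SimpleGraph.dist_eq_one_iff_adj.mpr hadj
  have t1 := hc.dist_triangle (u := x) (v := c) (w := k)
  have t2 := hc.dist_triangle (u := r) (v := x) (w := k)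
  rw [MH.mem_lev]
  omega

lemma MH.lev_cover (hc : g.Connected) (x : Fin n) (ℓ : ℕ) :
    MH.lev g r x (ℓ + 1) ⊆ (MH.ch g r x).biUnion (fun c => MH.lev g r c ℓ) := by
  classical
  intro k hk
  obtain ⟨h1, h2⟩ := MH.mem_lev.mp hk
  have hne : g.dist x k ≠ 0 := by omega
  obtain ⟨w, hw⟩ := SimpleGraph.exists_walk_of_dist_ne_zero hne
  cases w with
  | nil =>
    simp only [SimpleGraph.Walk.length_nil] at hw
    omega
  | @cons _ c _ hadj w' =>
    rw [SimpleGraph.Walk.length_cons, h1] at hw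
    have hck : g.dist c k ≤ ℓ := by
      have := SimpleGraph.dist_le w'
      omega
    have hxc : g.dist x c = 1 := SimpleGraph.dist_eq_one_iff_adj.mpr hadj
    have t1 := hc.dist_triangle (u := x) (v := c) (w := k)
    have t2 := hc.dist_triangle (u := r) (v := x) (w := c)
    have t3 := hc.dist_triangle (u := r) (v := c) (w := k)
    have hckeq : g.dist c k = ℓ := by omega
    have hrc : g.dist r c = g.dist r x + 1 := by omega
    rw [Finset.mem_biUnion]
    exact ⟨c, MH.mem_ch.mpr ⟨hadj, hrc⟩, MH.mem_lev.mpr ⟨hckeq, by omega⟩⟩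

lemma MH.lev_disj (hT : g.IsTree) {x c c' : Fin n} (hc : c ∈ MH.ch g r x)
    (hc' : c' ∈ MH.ch g r x) (hne : c ≠ c') (ℓ : ℕ) :
    Disjoint (MH.lev g r c ℓ) (MH.lev g r c' ℓ) := by
  obtain ⟨ha, hd⟩ := MH.mem_ch.mp hc
  obtain ⟨ha', hd'⟩ := MH.mem_ch.mp hc'
  rw [Finset.disjoint_left]
  intro k hk hk'
  obtain ⟨h1, h2⟩ := MH.mem_lev.mp hk
  obtain ⟨h1', h2'⟩ := MH.mem_lev.mp hk'
  exact hne (MH.child_eq (k := k) hT ha ha' hd hd' (by omega) (by omega))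

variable [DecidableRel g.Adj]

lemma MH.ch_card_le (hT : g.IsTree) {x : Fin n} (hx : x ≠ r) :
    (MH.ch g r x).card + 1 ≤ g.degree x := by
  obtain ⟨p, hp, hpd⟩ := MH.exists_parent hT.isConnected hx
  have hpn : p ∉ MH.ch g r x := by
    rw [MH.mem_ch]
    rintro ⟨-, hd⟩
    omega
  have hsub : insert p (MH.ch g r x) ⊆ g.neighborFinset x := by
    intro c hcm
    rw [Finset.mem_insert] at hcm
    rw [SimpleGraph.mem_neighborFinset]
    rcases hcm with rfl | hcm
    · exact hp
    · exact (MH.mem_ch.mp hcm).1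
  calc (MH.ch g r x).card + 1 = (insert p (MH.ch g r x)).card :=
        (Finset.card_insert_of_notMem hpn).symm
    _ ≤ (g.neighborFinset x).card := Finset.card_le_card hsub
    _ = g.degree x := g.card_neighborFinset_eq_degree x

lemma MH.degree_le_ch (hT : g.IsTree) (x : Fin n) :
    g.degree x ≤ (MH.ch g r x).card + 1 := by
  classical
  have key : ∀ c ∈ g.neighborFinset x \ MH.ch g r x,
      g.Adj x c ∧ g.dist r c + 1 = g.dist r x := by
    intro c hcm
    rw [Finset.mem_sdiff, SimpleGraph.mem_neighborFinset] at hcm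
    obtain ⟨hadj, hnch⟩ := hcm
    have h1 : g.dist r x ≠ g.dist r c := MH.adj_level hT hadj
    have hxc : g.dist x c = 1 := SimpleGraph.dist_eq_one_iff_adj.mpr hadj
    have h2 := hT.isConnected.dist_triangle (u := r) (v := x) (w := c)
    have h3 := hT.isConnected.dist_triangle (u := r) (v := c) (w := x)
    have hcx : g.dist c x = 1 := by rw [SimpleGraph.dist_comm]; exact hxc
    have h4 : g.dist r c ≠ g.dist r x + 1 := fun hh => hnch (MH.mem_ch.mpr ⟨hadj, hh⟩)
    exact ⟨hadj, by omega⟩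
  have hcard1 : (g.neighborFinset x \ MH.ch g r x).card ≤ 1 := by
    rw [Finset.card_le_one]
    intro a ha b hb
    obtain ⟨ha1, ha2⟩ := key a ha
    obtain ⟨hb1, hb2⟩ := key b hb
    exact MH.parent_eq hT ha1 hb1 ha2 hb2
  have := Finset.card_le_card_sdiff_add_card (s := g.neighborFinset x) (t := MH.ch g r x)
  have hdeg := g.card_neighborFinset_eq_degree x
  omega

/-- A helper: sums over finsets compare when all values on the first are dominated
by all values on the second and cardinalities compare. -/
lemma MH.sum_le_sum_of_card {s t : Finset (Fin n)} {f : Fin n → ℕ}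
    (hcard : s.card ≤ t.card) (h : ∀ a ∈ s, ∀ b ∈ t, f a ≤ f b) :
    ∑ a ∈ s, f a ≤ ∑ b ∈ t, f b := by
  rcases s.eq_empty_or_nonempty with rfl | hs
  · simp
  · have ht : t.Nonempty := Finset.card_pos.mp (lt_of_lt_of_le (Finset.card_pos.mpr hs) hcard)
    obtain ⟨b₀, hb₀, hmin⟩ := Finset.exists_min_image t f ht
    calc ∑ a ∈ s, f a ≤ ∑ _a ∈ s, f b₀ := Finset.sum_le_sum (fun a ha => h a ha b₀ hb₀)
      _ = s.card * f b₀ := by rw [Finset.sum_const, smul_eq_mul]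
      _ ≤ t.card * f b₀ := Nat.mul_le_mul_right _ hcard
      _ ≤ ∑ b ∈ t, f b := by
          simpa using Finset.card_nsmul_le_sum t f (f b₀) hmin

lemma MH.main (hT : g.IsTree)
    (hdeg : ∀ i j, g.dist r i < g.dist r j → g.degree j ≤ g.degree i) :
    ∀ ℓ : ℕ, ∀ i j : Fin n, g.dist r j = g.dist r i + 1 →
      (MH.lev g r j ℓ).card ≤ (MH.lev g r i ℓ).card := by
  intro ℓ
  induction ℓ with
  | zero =>
    intro i j _
    rw [MH.lev_zero hT.isConnected, MH.lev_zero hT.isConnected]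
    simp
  | succ ℓ IH =>
    intro i j hdepth
    classical
    have hj : j ≠ r := by
      intro hh
      rw [hh, SimpleGraph.dist_self] at hdepth
      omega
    have hcc : (MH.ch g r j).card ≤ (MH.ch g r i).card := by
      have h1 := MH.ch_card_le hT hj
      have h2 := MH.degree_le_ch (r := r) hT i
      have h3 := hdeg i j (by omega)
      omega
    calc (MH.lev g r j (ℓ + 1)).card
        ≤ ((MH.ch g r j).biUnion (fun c => MH.lev g r c ℓ)).card :=
          Finset.card_le_card (MH.lev_cover hT.isConnected j ℓ)
      _ ≤ ∑ c ∈ MH.ch g r j, (MH.lev g r c ℓ).card := Finset.card_biUnion_le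
      _ ≤ ∑ c ∈ MH.ch g r i, (MH.lev g r c ℓ).card := by
          refine MH.sum_le_sum_of_card hcc ?_
          intro c hc c' hc'
          have h1 := (MH.mem_ch.mp hc).2
          have h2 := (MH.mem_ch.mp hc').2
          exact IH c' c (by omega)
      _ = ((MH.ch g r i).biUnion (fun c => MH.lev g r c ℓ)).card :=
          (Finset.card_biUnion (fun c hc c' hc' hne => MH.lev_disj hT hc hc' hne ℓ)).symm
      _ ≤ (MH.lev g r i (ℓ + 1)).card :=
          Finset.card_le_card (Finset.biUnion_subset.mpr
            (fun c hc => MH.lev_subset hT.isConnected hc ℓ))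

end Aux

theorem stmt_12 {n : ℕ} (g : SimpleGraph (Fin n)) [DecidableRel g.Adj]
    (r : Fin n) (h : ℕ) (hMH : IsMonotoneHierarchy g r h)
    (i j : Fin n) (hdepth : g.dist r j = g.dist r i + 1) (ℓ : ℕ) :
    succCount g r j ℓ ≤ succCount g r i ℓ := by
  obtain ⟨hT, hdeg, -⟩ := hMH
  rw [MH.succCount_eq, MH.succCount_eq]
  exact MH.main hT hdeg ℓ i j hdepth
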